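/- Let k be a field and let R = k[x_1, x_2, ...]/(x_1, x_2, ...)^2 be the quotient of the polynomial ring in countably many variables by the square of the ideal generated by all the variables. Then R is not a coherent ring, and every R-module of finite projective dimension is projective; equivalently, every non-projective R-module has infinite projective dimension. In particular R is not regular, although every R-module admitting a resolution by degreewise finitely generated projective modules has finite projective dimension. -/

import Mathlib

open CategoryTheory CategoryTheory.Limits ZeroObject

noncomputable section

/-! ### The balanced tensor product `M ⊗_R N` of a right `R`-module `M` and a left
`R`-module `N`, defined as a quotient of `M ⊗_ℤ N`. -/

section Bal

variable (R : Type) [Ring R]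
variable (M : Type) [AddCommGroup M] [Module Rᵐᵒᵖ M]
variable (N : Type) [AddCommGroup N] [Module R N]

/-- The subgroup of balancing relations in `M ⊗_ℤ N`. -/
def balRel : Submodule ℤ (TensorProduct ℤ M N) :=
  Submodule.span ℤ { x | ∃ (r : R) (m : M) (n : N),
    x = (MulOpposite.op r • m) ⊗ₜ[ℤ] n - m ⊗ₜ[ℤ] (r • n) }

/-- The balanced tensor product `M ⊗_R N` of a right `R`-module `M` and a left
`R`-module `N`, as an abelian group (ℤ-module). -/
abbrev Bal := TensorProduct ℤ M N ⧸ balRel R M N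

variable {M N}
variable {M' M'' : Type} [AddCommGroup M'] [Module Rᵐᵒᵖ M'] [AddCommGroup M''] [Module Rᵐᵒᵖ M'']
variable {N' N'' : Type} [AddCommGroup N'] [Module R N'] [AddCommGroup N''] [Module R N'']

/-- Functoriality of the balanced tensor product. -/
def Bal.map (f : M →ₗ[Rᵐᵒᵖ] M') (g : N →ₗ[R] N') :
    Bal R M N →ₗ[ℤ] Bal R M' N' :=
  Submodule.mapQ _ _ (TensorProduct.map (f.restrictScalars ℤ) (g.restrictScalars ℤ)) (by
    rw [balRel, Submodule.span_le]
    rintro x ⟨r, m, n, rfl⟩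
    refine Submodule.subset_span ?_
    exact ⟨r, f m, g n, (map_sub (TensorProduct.map (f.restrictScalars ℤ) (g.restrictScalars ℤ)) _ _).trans (by simp [map_smul])⟩)

@[simp] lemma Bal.map_mk (f : M →ₗ[Rᵐᵒᵖ] M') (g : N →ₗ[R] N') (m : M) (n : N) :
    Bal.map R f g (Submodule.Quotient.mk (m ⊗ₜ[ℤ] n)) =
      Submodule.Quotient.mk (f m ⊗ₜ[ℤ] g n) := by
  rfl

lemma Bal.hom_ext {P : Type} [AddCommGroup P] [Module ℤ P]
    {h h' : Bal R M N →ₗ[ℤ] P}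
    (H : ∀ (m : M) (n : N), h (Submodule.Quotient.mk (m ⊗ₜ[ℤ] n)) =
      h' (Submodule.Quotient.mk (m ⊗ₜ[ℤ] n))) : h = h' := by
  apply Submodule.linearMap_qext
  exact TensorProduct.ext' H

lemma Bal.map_id :
    Bal.map R (LinearMap.id : M →ₗ[Rᵐᵒᵖ] M) (LinearMap.id : N →ₗ[R] N) = LinearMap.id := by
  apply Bal.hom_ext; intro m n; rw [Bal.map_mk]; rfl

lemma Bal.map_comp (f : M →ₗ[Rᵐᵒᵖ] M') (f' : M' →ₗ[Rᵐᵒᵖ] M'')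
    (g : N →ₗ[R] N') (g' : N' →ₗ[R] N'') :
    Bal.map R (f'.comp f) (g'.comp g) = (Bal.map R f' g').comp (Bal.map R f g) := by
  apply Bal.hom_ext; intro m n
  simp

lemma Bal.map_add_left (f f' : M →ₗ[Rᵐᵒᵖ] M') (g : N →ₗ[R] N') :
    Bal.map R (f + f') g = Bal.map R f g + Bal.map R f' g := by
  apply Bal.hom_ext; intro m n
  simp [← Submodule.Quotient.mk_add, ← TensorProduct.add_tmul]

lemma Bal.map_add_right (f : M →ₗ[Rᵐᵒᵖ] M') (g g' : N →ₗ[R] N') :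
    Bal.map R f (g + g') = Bal.map R f g + Bal.map R f g' := by
  apply Bal.hom_ext; intro m n
  simp [← Submodule.Quotient.mk_add, ← TensorProduct.tmul_add]

end Bal

/-! ### The balanced tensor product as a bifunctor -/

section balFunctor

variable (R : Type) [Ring R]

/-- The balanced tensor product bifunctor `ModuleCat Rᵐᵒᵖ ⥤ ModuleCat R ⥤ ModuleCat ℤ`. -/
def balFunctor : ModuleCat.{0} Rᵐᵒᵖ ⥤ ModuleCat.{0} R ⥤ ModuleCat.{0} ℤ where
  obj M :=
    { obj := fun N => ModuleCat.of ℤ (Bal R M N)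
      map := fun {N N'} g => ModuleCat.ofHom (Bal.map R LinearMap.id g.hom)
      map_id := fun N => by
        apply ModuleCat.hom_ext
        exact Bal.map_id R
      map_comp := fun {N₁ N₂ N₃} g g' => by
        apply ModuleCat.hom_ext
        have := Bal.map_comp R (LinearMap.id : M →ₗ[Rᵐᵒᵖ] M) LinearMap.id g.hom g'.hom
        rw [LinearMap.id_comp] at this
        exact this }
  map {M M'} f :=
    { app := fun N => ModuleCat.ofHom (Bal.map R f.hom LinearMap.id)
      naturality := fun {N N'} g => by
        apply ModuleCat.hom_ext
        show (Bal.map R f.hom LinearMap.id).comp (Bal.map R LinearMap.id g.hom)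
          = (Bal.map R LinearMap.id g.hom).comp (Bal.map R f.hom LinearMap.id)
        rw [← Bal.map_comp, ← Bal.map_comp]
        simp }
  map_id M := by
    apply NatTrans.ext
    funext N
    apply ModuleCat.hom_ext
    exact Bal.map_id R
  map_comp {M₁ M₂ M₃} f f' := by
    apply NatTrans.ext
    funext N
    apply ModuleCat.hom_ext
    show Bal.map R (f'.hom.comp f.hom) _ = (Bal.map R f'.hom LinearMap.id).comp (Bal.map R f.hom LinearMap.id)
    rw [← Bal.map_comp]
    simp

instance balFunctor_additive : (balFunctor R).Additive where
  map_add {M M'} {f f'} := by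
    apply NatTrans.ext
    funext N
    apply ModuleCat.hom_ext
    exact Bal.map_add_left R f.hom f'.hom LinearMap.id

instance balFunctor_obj_additive (M : ModuleCat.{0} Rᵐᵒᵖ) :
    ((balFunctor R).obj M).Additive where
  map_add {N N'} {g g'} := by
    apply ModuleCat.hom_ext
    exact Bal.map_add_right R LinearMap.id g.hom g'.hom

end balFunctor

/-! ### Module-theoretic notions over a not necessarily commutative ring.
Right `R`-modules are treated as (left) modules over the opposite ring `Rᵐᵒᵖ`. -/

section ModuleNotions

variable (R : Type) [Ring R]

/-- A left `R`-module `N` is flat if tensoring with it preserves injectivity of maps of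
right `R`-modules. -/
def FlatModule (N : Type) [AddCommGroup N] [Module R N] : Prop :=
  ∀ (M M' : Type) [AddCommGroup M] [Module Rᵐᵒᵖ M] [AddCommGroup M'] [Module Rᵐᵒᵖ M']
    (f : M →ₗ[Rᵐᵒᵖ] M'), Function.Injective f →
      Function.Injective (Bal.map R f (LinearMap.id : N →ₗ[R] N))

/-- Vanishing of `Ext¹_R(X, Y)`, expressed by the splitting of every short exact
sequence `0 → Y → E → X → 0`. -/
def ext1Zero (X Y : Type) [AddCommGroup X] [Module R X] [AddCommGroup Y] [Module R Y] :
    Prop :=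
  ∀ (E : Type) [AddCommGroup E] [Module R E] (i : Y →ₗ[R] E) (p : E →ₗ[R] X),
    Function.Injective i → Function.Surjective p → Function.Exact i p →
      ∃ s : X →ₗ[R] E, p.comp s = LinearMap.id

/-- A left `R`-module `C` is cotorsion if `Ext¹_R(F, C) = 0` for every flat left
`R`-module `F`. -/
def CotorsionModule (C : Type) [AddCommGroup C] [Module R C] : Prop :=
  ∀ (F : Type) [AddCommGroup F] [Module R F], FlatModule R F → ext1Zero R F C

/-- A left `R`-module `E` is fp-injective if `Ext¹_R(F, E) = 0` for every finitely
presented left `R`-module `F`. -/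
def FpInjectiveModule (E : Type) [AddCommGroup E] [Module R E] : Prop :=
  ∀ (F : Type) [AddCommGroup F] [Module R F],
    Module.FinitePresentation R F → ext1Zero R F E

/-- A left `R`-module `P` is fp-projective if `Ext¹_R(P, E) = 0` for every fp-injective
left `R`-module `E`. -/
def FpProjectiveModule (P : Type) [AddCommGroup P] [Module R P] : Prop :=
  ∀ (E : Type) [AddCommGroup E] [Module R E], FpInjectiveModule R E → ext1Zero R P E

/-- `ProjDimLE R n M` says that the left `R`-module `M` has projective dimension at
most `n`, i.e. it admits a projective resolution of length `n`. -/
def ProjDimLE : ℕ → ∀ (M : Type) [AddCommGroup M] [Module R M], Prop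
  | 0 => fun M _ _ => Module.Projective R M
  | n + 1 => fun M _ _ =>
      ∃ (P : Type) (_ : AddCommGroup P) (_ : Module R P) (p : P →ₗ[R] M),
        Module.Projective R P ∧ Function.Surjective p ∧
          ProjDimLE n (LinearMap.ker p)

/-- A left `R`-module has finite projective dimension if it admits a finite projective
resolution. -/
def FiniteProjDim (M : Type) [AddCommGroup M] [Module R M] : Prop :=
  ∃ n : ℕ, ProjDimLE R n M

/-- `FlatDimLE R n M` says that the left `R`-module `M` has flat dimension at most `n`,
i.e. it admits a flat resolution of length `n`. -/
def FlatDimLE : ℕ → ∀ (M : Type) [AddCommGroup M] [Module R M], Prop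
  | 0 => fun M _ _ => FlatModule R M
  | n + 1 => fun M _ _ =>
      ∃ (F : Type) (_ : AddCommGroup F) (_ : Module R F) (p : F →ₗ[R] M),
        FlatModule R F ∧ Function.Surjective p ∧
          FlatDimLE n (LinearMap.ker p)

/-- A left `R`-module has finite flat dimension if it admits a finite flat resolution. -/
def FiniteFlatDim (M : Type) [AddCommGroup M] [Module R M] : Prop :=
  ∃ n : ℕ, FlatDimLE R n M

/-- `R` is right coherent: every finitely generated right ideal of `R` is finitely
presented as a right `R`-module. -/
def RightCoherent : Prop :=
  ∀ I : Submodule Rᵐᵒᵖ R, I.FG → Module.FinitePresentation Rᵐᵒᵖ I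

/-- `R` is right regular: every finitely generated right ideal of `R` has finite
projective dimension as a right `R`-module. -/
def RightRegular : Prop :=
  ∀ I : Submodule Rᵐᵒᵖ R, I.FG → FiniteProjDim Rᵐᵒᵖ I

/-- `R` is left coherent: every finitely generated left ideal of `R` is finitely
presented as a left `R`-module. -/
def LeftCoherent : Prop :=
  ∀ I : Submodule R R, I.FG → Module.FinitePresentation R I

/-- `R` is left regular: every finitely generated left ideal of `R` has finite
projective dimension as a left `R`-module. -/
def LeftRegular : Prop :=
  ∀ I : Submodule R R, I.FG → FiniteProjDim R I

/-- `R` is von Neumann regular if every element `a` has a quasi-inverse `b` with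
`a * b * a = a`. -/
def VonNeumannRegular : Prop := ∀ a : R, ∃ b : R, a * b * a = a

/-- An object `M` of `ModuleCat A` admits a projective resolution by degreewise
finitely generated projective modules. -/
def HasDegreewiseFGProjectiveResolution {A : Type} [Ring A] (M : ModuleCat.{0} A) : Prop :=
  ∃ res : ProjectiveResolution M, ∀ n : ℕ, Module.Finite A (res.complex.X n)

end ModuleNotions

/-! ### Complexes -/

section Complexes

variable (A : Type) [Ring A]

/-- Unbounded (cochain) complexes of modules. -/
abbrev Cx := CochainComplex (ModuleCat.{0} A) ℤ

/-- A complex is acyclic if it is exact in every degree. -/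
def IsAcyclic (C : Cx A) : Prop := ∀ n : ℤ, C.ExactAt n

/-- Acyclicity for complexes of abelian groups. -/
def IsAcyclicAb (C : CochainComplex AddCommGrpCat.{0} ℤ) : Prop := ∀ n : ℤ, C.ExactAt n

/-- Acyclicity for complexes of ℤ-modules. -/
def IsAcyclicZMod (C : CochainComplex (ModuleCat.{0} ℤ) ℤ) : Prop := ∀ n : ℤ, C.ExactAt n

/-- A complex is contractible if it is homotopy equivalent to the zero complex. -/
def IsContractible (C : Cx A) : Prop := Nonempty (HomotopyEquiv C (0 : Cx A))

variable {A}

/-- A complex `P` is semi-projective if it consists of projective modules and the total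
Hom complex `Hom(P, C)` is acyclic for every acyclic complex `C`. -/
def SemiProjective (P : Cx A) : Prop :=
  (∀ n : ℤ, Module.Projective A (P.X n)) ∧
  ∀ C : Cx A, IsAcyclic A C → IsAcyclicAb (CochainComplex.HomComplex P C)

/-- A complex `I` is semi-injective if it consists of injective modules and the total
Hom complex `Hom(C, I)` is acyclic for every acyclic complex `C`. -/
def SemiInjective (I : Cx A) : Prop :=
  (∀ n : ℤ, Module.Injective A (I.X n)) ∧
  ∀ C : Cx A, IsAcyclic A C → IsAcyclicAb (CochainComplex.HomComplex C I)

variable (A)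

/-- A complex `E` (of right modules, say) is semi-fp-injective if it consists of
fp-injective modules and the total Hom complex `Hom(X, E)` is acyclic for every acyclic
complex `X` whose cycle modules are all fp-projective. -/
def SemiFpInjective (E : Cx A) : Prop :=
  (∀ n : ℤ, FpInjectiveModule A (E.X n)) ∧
  ∀ X : Cx A, IsAcyclic A X → (∀ n : ℤ, FpProjectiveModule A (X.cycles n)) →
    IsAcyclicAb (CochainComplex.HomComplex X E)

variable {A}

end Complexes

section TensorComplexes

variable (R : Type) [Ring R]

/-- The total tensor complex `K ⊗_R L` of a complex `K` of right `R`-modules and a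
complex `L` of left `R`-modules. -/
def tensorComplex (K : Cx Rᵐᵒᵖ) (L : Cx R) : CochainComplex (ModuleCat.{0} ℤ) ℤ :=
  HomologicalComplex.mapBifunctor K L (balFunctor R) (ComplexShape.up ℤ)

/-- A complex `F` of left `R`-modules is semi-flat if it consists of flat modules and
the tensor complex `K ⊗_R F` is acyclic for every acyclic complex `K` of right
`R`-modules. -/
def SemiFlat (F : Cx R) : Prop :=
  (∀ n : ℤ, FlatModule R (F.X n)) ∧
  ∀ K : Cx Rᵐᵒᵖ, IsAcyclic Rᵐᵒᵖ K → IsAcyclicZMod (tensorComplex R K F)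

/-- An acyclic complex `X` of left `R`-modules is pure acyclic if each short exact
sequence `0 → Z^n(X) → X^n → Z^{n+1}(X) → 0` of cycle modules is pure exact, i.e.
stays a short exact sequence after tensoring with every right `R`-module `M`. -/
def PureAcyclic (X : Cx R) : Prop :=
  IsAcyclic R X ∧
  ∀ (n : ℤ) (M : ModuleCat.{0} Rᵐᵒᵖ),
    Function.Injective (((balFunctor R).obj M).map (X.iCycles n)) ∧
    Function.Exact (((balFunctor R).obj M).map (X.iCycles n))
      (((balFunctor R).obj M).map (X.toCycles n (n + 1))) ∧
    Function.Surjective (((balFunctor R).obj M).map (X.toCycles n (n + 1)))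

/-- `S ⊗_R -` is exact and reflects exactness, where `S` is a right `R`-module. -/
def FaithfullyFlatRight (S : Type) [AddCommGroup S] [Module Rᵐᵒᵖ S] : Prop :=
  ∀ (N₁ N₂ N₃ : Type) [AddCommGroup N₁] [Module R N₁] [AddCommGroup N₂] [Module R N₂]
    [AddCommGroup N₃] [Module R N₃] (g₁ : N₁ →ₗ[R] N₂) (g₂ : N₂ →ₗ[R] N₃),
    Function.Exact g₁ g₂ ↔
      Function.Exact (Bal.map R (LinearMap.id : S →ₗ[Rᵐᵒᵖ] S) g₁)
        (Bal.map R (LinearMap.id : S →ₗ[Rᵐᵒᵖ] S) g₂)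

end TensorComplexes



open Function LinearMap in
lemma _dummy_aux : True := trivial

open Function LinearMap

noncomputable section AuxAbstract

variable {R : Type} [CommRing R] {m : Ideal R}

lemma Aux.smul_top_zero (hsq : ∀ a ∈ m, ∀ b ∈ m, a * b = 0)
    {M : Type} [AddCommGroup M] [Module R M] {a : R} (ha : a ∈ m)
    {x : M} (hx : x ∈ (m • ⊤ : Submodule R M)) : a • x = 0 := by
  refine Submodule.smul_induction_on hx (fun b hb y _ => ?_) (fun y z hy hz => ?_)
  · rw [smul_smul, hsq a ha b hb, zero_smul]
  · rw [smul_add, hy, hz, add_zero]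

lemma Aux.nak (hsq : ∀ a ∈ m, ∀ b ∈ m, a * b = 0)
    {M : Type} [AddCommGroup M] [Module R M]
    {N : Submodule R M} (h : N ⊔ m • ⊤ = ⊤) : N = ⊤ := by
  have hle : (m • ⊤ : Submodule R M) ≤ N := by
    refine Submodule.smul_le.2 (fun a ha x _ => ?_)
    have hx : x ∈ N ⊔ m • ⊤ := by rw [h]; trivial
    obtain ⟨y, hy, z, hz, rfl⟩ := Submodule.mem_sup.1 hx
    rw [smul_add, Aux.smul_top_zero hsq ha hz, add_zero]
    exact N.smul_mem a hy
  rw [← h, sup_eq_left.2 hle]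

lemma Aux.key_zero (hu : ∀ r : R, r ∉ m → IsUnit r) (hbot : m ≠ ⊥)
    {K : Type} [AddCommGroup K] [Module R K] (hproj : Module.Projective R K)
    (htors : ∀ a ∈ m, ∀ x : K, a • x = (0 : K)) : ∀ x : K, x = 0 := by
  obtain ⟨s, hs⟩ := hproj.out
  intro x
  have hco : ∀ j : K, s x j ∈ m := by
    intro j
    by_contra hj
    obtain ⟨u, hu'⟩ := hu _ hj
    apply hbot
    rw [eq_bot_iff]
    intro a ha
    have h0 : a • s x = 0 := by rw [← map_smul, htors a ha x, map_zero]
    have h1 : a * s x j = 0 := by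
      have := DFunLike.congr_fun h0 j
      simpa using this
    rw [← hu'] at h1
    have : a = a * ↑u * ↑u⁻¹ := by rw [mul_assoc, Units.mul_inv, mul_one]
    rw [Submodule.mem_bot, this, h1, zero_mul]
  have hx : x = Finsupp.linearCombination R _root_.id (s x) := (hs x).symm
  rw [hx, Finsupp.linearCombination_apply, Finsupp.sum]
  exact Finset.sum_eq_zero fun j _ => htors _ (hco j) j

lemma Aux.isMaximal (hu : ∀ r : R, r ∉ m → IsUnit r) (hne : m ≠ ⊤) : m.IsMaximal := by
  rw [Ideal.isMaximal_iff]
  refine ⟨fun h1 => hne (Ideal.eq_top_of_isUnit_mem m h1 isUnit_one), ?_⟩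
  intro J b _ hbm hbJ
  obtain ⟨u, rfl⟩ := hu b hbm
  have : (↑u⁻¹ : R) * ↑u ∈ J := J.mul_mem_left _ hbJ
  rwa [Units.inv_mul] at this

lemma Aux.mcover (hsq : ∀ a ∈ m, ∀ b ∈ m, a * b = 0)
    (hu : ∀ r : R, r ∉ m → IsUnit r) (hne : m ≠ ⊤)
    (M : Type) [AddCommGroup M] [Module R M] :
    ∃ (ι : Type) (p : (ι →₀ R) →ₗ[R] M), Surjective p ∧
      LinearMap.ker p ≤ (m • ⊤ : Submodule R (ι →₀ R)) ∧
      (Module.Finite R M → Finite ι) := by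
  classical
  haveI hmax : m.IsMaximal := Aux.isMaximal hu hne
  letI : Field (R ⧸ m) := Ideal.Quotient.field m
  set V := M ⧸ (m • ⊤ : Submodule R M) with hVdef
  have htors : Module.IsTorsionBySet R V (m : Set R) := by
    rintro x ⟨a, ha⟩
    obtain ⟨y, rfl⟩ := Submodule.Quotient.mk_surjective _ x
    rw [← Submodule.Quotient.mk_smul, Submodule.Quotient.mk_eq_zero]
    exact Submodule.smul_mem_smul ha trivial
  letI : Module (R ⧸ m) V := htors.module
  have hmk : ∀ (r : R) (v : V), (Ideal.Quotient.mk m r) • v = r • v :=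
    fun r v => htors.mk_smul r v
  set b := Module.Basis.ofVectorSpace (R ⧸ m) V with hbdef
  set ι := ↥(Module.Basis.ofVectorSpaceIndex (R ⧸ m) V)
  set mQ := (m • ⊤ : Submodule R M).mkQ with hmQ
  have hrep : ∀ i : ι, ∃ x : M, mQ x = b i := fun i =>
    Submodule.Quotient.mk_surjective _ (b i)
  choose rep hrepeq using hrep
  set p : (ι →₀ R) →ₗ[R] M := Finsupp.linearCombination R rep with hpdef
  -- key computation
  have hkey : ∀ d : ι →₀ R,
      mQ (p d) = Finsupp.linearCombination (R ⧸ m) b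
        (d.mapRange (Ideal.Quotient.mk m) (map_zero _)) := by
    intro d
    rw [hpdef, Finsupp.linearCombination_apply, Finsupp.linearCombination_apply,
      Finsupp.sum_mapRange_index (by intro i; rw [zero_smul])]
    rw [map_finsuppSum]
    refine Finsupp.sum_congr ?_
    intro i _
    rw [map_smul, hrepeq, hmk]
  -- lift function
  have hg : ∀ c : R ⧸ m, ∃ r : R, Ideal.Quotient.mk m r = c ∧ (c = 0 → r = 0) := by
    intro c
    by_cases h : c = 0
    · exact ⟨0, by simp [h], fun _ => rfl⟩
    · obtain ⟨r, hr⟩ := Ideal.Quotient.mk_surjective c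
      exact ⟨r, hr, fun hc => absurd hc h⟩
  choose g hgmk hg0 using hg
  have hsurj : Surjective p := by
    have hrange : LinearMap.range p = ⊤ := by
      refine Aux.nak hsq ?_
      rw [eq_top_iff]
      intro x _
      set c := b.repr (mQ x) with hc
      set d : ι →₀ R := c.mapRange g (hg0 0 rfl) with hd
      have hdc : d.mapRange (Ideal.Quotient.mk m) (map_zero _) = c := by
        ext i
        rw [Finsupp.mapRange_apply, Finsupp.mapRange_apply, hgmk]
      have h1 : mQ (p d) = mQ x := by
        rw [hkey, hdc, hc, b.linearCombination_repr]
      have h2 : x - p d ∈ (m • ⊤ : Submodule R M) := by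
        rw [← Submodule.ker_mkQ (m • ⊤ : Submodule R M)]
        rw [LinearMap.mem_ker, map_sub, h1, sub_self]
      refine Submodule.mem_sup.2 ⟨p d, ⟨d, rfl⟩, x - p d, h2, by abel⟩
    exact LinearMap.range_eq_top.1 hrange
  refine ⟨ι, p, hsurj, ?_, ?_⟩
  · intro x hx
    have h0 : Finsupp.linearCombination (R ⧸ m) b
        (x.mapRange (Ideal.Quotient.mk m) (map_zero _)) = 0 := by
      rw [← hkey, LinearMap.mem_ker.1 hx, map_zero]
    have hxm : ∀ i, x i ∈ m := by
      have := linearIndependent_iff.1 b.linearIndependent _ h0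
      intro i
      have hi := DFunLike.congr_fun this i
      rw [Finsupp.mapRange_apply] at hi
      exact Ideal.Quotient.eq_zero_iff_mem.1 hi
    have hxe : x = x.sum fun i r => r • Finsupp.single i (1 : R) := by
      conv_lhs => rw [← Finsupp.sum_single x]
      refine Finsupp.sum_congr fun i _ => ?_
      rw [Finsupp.smul_single, smul_eq_mul, mul_one]
    rw [hxe]
    exact Submodule.sum_mem _ fun i _ => Submodule.smul_mem_smul (hxm i) trivial
  · intro hfin
    haveI : Module.Finite R V := Module.Finite.of_surjective mQ (Submodule.mkQ_surjective _)
    letI : IsScalarTower R (R ⧸ m) V := htors.isScalarTower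
    haveI : Module.Finite (R ⧸ m) V := Module.Finite.of_restrictScalars_finite R _ _
    exact Module.Finite.finite_basis b

end AuxAbstract


noncomputable section AuxSchanuel

variable {R : Type} [CommRing R]

lemma Aux.schanuel {M P Q : Type} [AddCommGroup M] [Module R M] [AddCommGroup P] [Module R P]
    [AddCommGroup Q] [Module R Q] (p : P →ₗ[R] M) (q : Q →ₗ[R] M)
    (hp : Surjective p) (hq : Surjective q)
    (hP : Module.Projective R P) (hQ : Module.Projective R Q) :
    ∃ (i : ker q →ₗ[R] (ker p × Q)) (r : (ker p × Q) →ₗ[R] ker q),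
      r.comp i = LinearMap.id := by
  haveI := hP; haveI := hQ
  set X : Submodule R (P × Q) :=
    LinearMap.ker (p.comp (LinearMap.fst R P Q) - q.comp (LinearMap.snd R P Q)) with hX
  have hXmem : ∀ z : P × Q, z ∈ X ↔ p z.1 = q z.2 := by
    intro z
    rw [hX, LinearMap.mem_ker, LinearMap.sub_apply, LinearMap.comp_apply, LinearMap.comp_apply,
      sub_eq_zero]
    rfl
  set π₁ : ↥X →ₗ[R] P := (LinearMap.fst R P Q).comp X.subtype with hπ₁
  set π₂ : ↥X →ₗ[R] Q := (LinearMap.snd R P Q).comp X.subtype with hπ₂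
  have hπ₁s : Surjective π₁ := by
    intro a
    obtain ⟨b, hb⟩ := hq (p a)
    exact ⟨⟨(a, b), (hXmem _).2 hb.symm⟩, rfl⟩
  have hπ₂s : Surjective π₂ := by
    intro b
    obtain ⟨a, ha⟩ := hp (q b)
    exact ⟨⟨(a, b), (hXmem _).2 ha⟩, rfl⟩
  obtain ⟨σ, hσ⟩ := Module.projective_lifting_property π₁ LinearMap.id hπ₁s
  obtain ⟨τ, hτ⟩ := Module.projective_lifting_property π₂ LinearMap.id hπ₂s
  have hσ' : ∀ a : P, ((σ a : P × Q)).1 = a := fun a => LinearMap.congr_fun hσ a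
  have hτ' : ∀ b : Q, ((τ b : P × Q)).2 = b := fun b => LinearMap.congr_fun hτ b
  -- j : ker q → X
  set j : ↥(ker q) →ₗ[R] ↥X := LinearMap.codRestrict X
    ((LinearMap.inr R P Q).comp (ker q).subtype)
    (fun b => (hXmem _).2 (by
      have hb : q (b : Q) = 0 := b.2
      simp [hb])) with hj
  -- ρ : X → ker q
  set ρ : ↥X →ₗ[R] ↥(ker q) := LinearMap.codRestrict (ker q)
    (π₂ - π₂.comp (σ.comp π₁))
    (fun z => by
      have hz : p (z : P × Q).1 = q (z : P × Q).2 := (hXmem _).1 z.2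
      have hz2 : p ((σ (π₁ z) : P × Q)).1 = q ((σ (π₁ z) : P × Q)).2 :=
        (hXmem _).1 (σ (π₁ z)).2
      rw [LinearMap.mem_ker, LinearMap.sub_apply, map_sub]
      show q (π₂ z) - q (π₂ (σ (π₁ z))) = 0
      show q (z : P × Q).2 - q ((σ (π₁ z) : P × Q)).2 = 0
      rw [← hz, ← hz2, hσ']
      show p (z : P × Q).1 - p (z : P × Q).1 = 0
      rw [sub_self]) with hρ
  -- u : X → ker p × Q
  set u : ↥X →ₗ[R] (↥(ker p) × Q) := LinearMap.prod
    (LinearMap.codRestrict (ker p) (π₁ - π₁.comp (τ.comp π₂))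
      (fun z => by
        have hz : p (z : P × Q).1 = q (z : P × Q).2 := (hXmem _).1 z.2
        have hz2 : p ((τ (π₂ z) : P × Q)).1 = q ((τ (π₂ z) : P × Q)).2 :=
          (hXmem _).1 (τ (π₂ z)).2
        rw [LinearMap.mem_ker, LinearMap.sub_apply, map_sub]
        show p (z : P × Q).1 - p ((τ (π₂ z) : P × Q)).1 = 0
        rw [hz, hz2, hτ']
        show q (z : P × Q).2 - q (z : P × Q).2 = 0
        rw [sub_self]))
    π₂ with hu
  -- v : ker p × Q → X
  set v : (↥(ker p) × Q) →ₗ[R] ↥X := LinearMap.codRestrict X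
    ((LinearMap.inl R P Q).comp ((ker p).subtype.comp (LinearMap.fst R (↥(ker p)) Q)) +
      X.subtype.comp (τ.comp (LinearMap.snd R (↥(ker p)) Q)))
    (fun z => by
      have hz2 : p ((τ z.2 : P × Q)).1 = q ((τ z.2 : P × Q)).2 := (hXmem _).1 (τ z.2).2
      have hz1 : p (z.1 : P) = 0 := z.1.2
      refine (hXmem _).2 ?_
      show p ((z.1 : P) + (τ z.2 : P × Q).1) = q ((0 : Q) + (τ z.2 : P × Q).2)
      rw [map_add, map_add, hz1, zero_add, hz2, map_zero, zero_add]) with hv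
  refine ⟨u.comp j, ρ.comp v, ?_⟩
  apply LinearMap.ext
  intro x
  apply Subtype.ext
  show ((ρ (v (u (j x))) : Q)) = (x : Q)
  simp only [hρ, hv, hu, hj, hπ₁, hπ₂, LinearMap.codRestrict_apply, LinearMap.comp_apply,
    LinearMap.prod_apply, Pi.prod, LinearMap.add_apply, LinearMap.sub_apply,
    LinearMap.coe_comp, comp_apply, Submodule.coe_subtype, LinearMap.inl_apply,
    LinearMap.inr_apply, LinearMap.fst_apply, LinearMap.snd_apply, Prod.fst_add,
    Prod.snd_add, Submodule.coe_add, Prod.fst_zero, Prod.snd_zero]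
  simp only [hτ', zero_sub, neg_add_cancel, map_zero]
  simp

end AuxSchanuel


noncomputable section AuxMore

open Function LinearMap

variable {R : Type} [CommRing R] {m : Ideal R}

lemma Aux.schanuel_proj {M P Q : Type} [AddCommGroup M] [Module R M] [AddCommGroup P]
    [Module R P] [AddCommGroup Q] [Module R Q] (p : P →ₗ[R] M) (q : Q →ₗ[R] M)
    (hp : Surjective p) (hq : Surjective q)
    (hP : Module.Projective R P) (hQ : Module.Projective R Q)
    (hk : Module.Projective R (ker p)) : Module.Projective R (ker q) := by
  haveI := hk; haveI := hQ
  obtain ⟨i, r, hri⟩ := Aux.schanuel p q hp hq hP hQ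
  exact Module.Projective.of_split i r hri

lemma Aux.schanuel_fg {M P Q : Type} [AddCommGroup M] [Module R M] [AddCommGroup P]
    [Module R P] [AddCommGroup Q] [Module R Q] (p : P →ₗ[R] M) (q : Q →ₗ[R] M)
    (hp : Surjective p) (hq : Surjective q)
    (hP : Module.Projective R P) (hQ : Module.Projective R Q)
    (hk : (ker p).FG) (hQf : Module.Finite R Q) : (ker q).FG := by
  haveI := hQf
  haveI : Module.Finite R (ker p) := Module.Finite.iff_fg.2 hk
  obtain ⟨i, r, hri⟩ := Aux.schanuel p q hp hq hP hQ
  have hrs : Surjective r := fun y => ⟨i y, LinearMap.congr_fun hri y⟩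
  exact Module.Finite.iff_fg.1 (Module.Finite.of_surjective r hrs)

lemma Aux.projDimLE_projective (hsq : ∀ a ∈ m, ∀ b ∈ m, a * b = 0)
    (hu : ∀ r : R, r ∉ m → IsUnit r) (hbot : m ≠ ⊥) (hne : m ≠ ⊤) :
    ∀ (n : ℕ) (M : Type) [AddCommGroup M] [Module R M],
      ProjDimLE R n M → Module.Projective R M := by
  intro n
  induction n with
  | zero => intro M _ _ h; exact h
  | succ n ih =>
    intro M _ _ h
    obtain ⟨P, _, _, p, hP, hps, hker⟩ := h
    have hkp : Module.Projective R (ker p) := ih _ hker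
    obtain ⟨ι, q, hqs, hqk, -⟩ := Aux.mcover hsq hu hne M
    have hQ : Module.Projective R (ι →₀ R) := inferInstance
    have hkq : Module.Projective R (ker q) := Aux.schanuel_proj p q hps hqs hP hQ hkp
    have htors : ∀ a ∈ m, ∀ x : ker q, a • x = (0 : ker q) := by
      intro a ha x
      apply Subtype.ext
      show a • (x : ι →₀ R) = 0
      exact Aux.smul_top_zero hsq ha (hqk x.2)
    have hz := Aux.key_zero (K := ↥(ker q)) hu hbot hkq htors
    have hkerbot : ker q = ⊥ := by
      rw [eq_bot_iff]
      intro y hy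
      have := hz ⟨y, hy⟩
      simpa [Submodule.mem_bot] using congrArg Subtype.val this
    exact Module.Projective.of_equiv
      (LinearEquiv.ofBijective q ⟨ker_eq_bot.1 hkerbot, hqs⟩)

lemma Aux.finsupp_finite (ι : Type) [Finite ι] : Module.Finite R (ι →₀ R) := by
  cases nonempty_fintype ι
  exact Module.Finite.equiv (Finsupp.linearEquivFunOnFinite R R ι).symm

set_option maxHeartbeats 1000000 in
lemma Aux.part5 (hsq : ∀ a ∈ m, ∀ b ∈ m, a * b = 0)
    (hu : ∀ r : R, r ∉ m → IsUnit r) (hbot : m ≠ ⊥) (hne : m ≠ ⊤) (hmfg : ¬ m.FG)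
    {M X₀ X₁ X₂ : Type} [AddCommGroup M] [Module R M] [AddCommGroup X₀] [Module R X₀]
    [AddCommGroup X₁] [Module R X₁] [AddCommGroup X₂] [Module R X₂]
    (hX₀ : Module.Projective R X₀) (hX₁ : Module.Projective R X₁)
    (hf₀ : Module.Finite R X₀) (hf₁ : Module.Finite R X₁) (hf₂ : Module.Finite R X₂)
    (ε : X₀ →ₗ[R] M) (d₁ : X₁ →ₗ[R] X₀) (d₂ : X₂ →ₗ[R] X₁)
    (hε : Surjective ε) (h1 : range d₁ = ker ε) (h2 : range d₂ = ker d₁) :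
    Module.Projective R M := by
  haveI := hf₀; haveI := hf₁; haveI := hf₂
  haveI : Module.Finite R M := Module.Finite.of_surjective ε hε
  obtain ⟨ι, q, hqs, hqk, hfin⟩ := Aux.mcover hsq hu hne M
  haveI hι : Finite ι := hfin inferInstance
  haveI hFfin : Module.Finite R (ι →₀ R) := Aux.finsupp_finite ι
  by_cases hbotq : ker q = ⊥
  · exact Module.Projective.of_equiv (LinearEquiv.ofBijective q ⟨ker_eq_bot.1 hbotq, hqs⟩)
  exfalso
  apply hmfg
  have hFproj : Module.Projective R (ι →₀ R) := inferInstance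
  have hkerε : (ker ε).FG := by
    rw [← h1, LinearMap.range_eq_map]
    exact (Module.finite_def.1 hf₁).map d₁
  have hK : (ker q).FG := Aux.schanuel_fg ε q hε hqs hX₀ hFproj hkerε hFfin
  haveI : Module.Finite R (ker q) := Module.Finite.iff_fg.2 hK
  have htorsK : ∀ a ∈ m, ∀ x : ker q, a • x = (0 : ker q) := by
    intro a ha x
    apply Subtype.ext
    show a • (x : ι →₀ R) = 0
    exact Aux.smul_top_zero hsq ha (hqk x.2)
  -- d₁' : X₁ → ker ε
  set d₁' : X₁ →ₗ[R] ↥(ker ε) := LinearMap.codRestrict (ker ε) d₁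
    (fun x => by rw [← h1]; exact LinearMap.mem_range_self d₁ x) with hd₁'
  have hd1's : Surjective d₁' := by
    intro y
    have : (y : X₀) ∈ range d₁ := by rw [h1]; exact y.2
    obtain ⟨x, hx⟩ := this
    exact ⟨x, Subtype.ext hx⟩
  obtain ⟨i, r, hri⟩ := Aux.schanuel ε q hε hqs hX₀ hFproj
  have hrs : Surjective r := fun y => ⟨i y, LinearMap.congr_fun hri y⟩
  set π : (X₁ × (ι →₀ R)) →ₗ[R] (↥(ker ε) × (ι →₀ R)) :=
    d₁'.prodMap LinearMap.id with hπ
  have hπs : Surjective π := hd1's.prodMap surjective_id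
  set p₂ : (X₁ × (ι →₀ R)) →ₗ[R] ↥(ker q) := r.comp π with hp₂
  have hp₂s : Surjective p₂ := hrs.comp hπs
  haveI : Module.Finite R (ker ε) := Module.Finite.iff_fg.2 hkerε
  have hkerr : (ker r).FG := by
    set w : (↥(ker ε) × (ι →₀ R)) →ₗ[R] ↥(ker r) :=
      LinearMap.codRestrict (ker r) (LinearMap.id - i.comp r)
        (fun z => by
          have hri' : r (i (r z)) = r z := LinearMap.congr_fun hri (r z)
          rw [LinearMap.mem_ker, LinearMap.sub_apply, map_sub, LinearMap.id_apply,
            LinearMap.comp_apply, hri', sub_self]) with hw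
    have hws : Surjective w := by
      intro y
      refine ⟨(y : ↥(ker ε) × (ι →₀ R)), Subtype.ext ?_⟩
      show (y : ↥(ker ε) × (ι →₀ R)) - i (r (y : ↥(ker ε) × (ι →₀ R))) = (y : _)
      rw [LinearMap.mem_ker.1 y.2, map_zero, sub_zero]
    exact Module.Finite.iff_fg.1 (Module.Finite.of_surjective w hws)
  have hkerp₂ : (ker p₂).FG := by
    have hkerπfg : (ker π).FG := by
      rw [hπ, LinearMap.ker_prodMap]
      refine Submodule.FG.prod ?_ ?_
      · have : ker d₁' = ker d₁ := LinearMap.ker_codRestrict _ _ _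
        rw [this, ← h2, LinearMap.range_eq_map]
        exact (Module.finite_def.1 hf₂).map d₂
      · rw [LinearMap.ker_id]; exact Submodule.fg_bot
    apply Submodule.fg_of_fg_map_of_fg_inf_ker π
    · have hmapeq : Submodule.map π (ker p₂) = ker r := by
        rw [hp₂, LinearMap.ker_comp, Submodule.map_comap_eq_of_surjective hπs]
      rw [hmapeq]; exact hkerr
    · have hle : ker π ≤ ker p₂ := by
        intro x hx
        rw [LinearMap.mem_ker] at hx ⊢
        rw [hp₂, LinearMap.comp_apply, hx, map_zero]
      rw [inf_eq_right.2 hle]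
      exact hkerπfg
  -- minimal cover of K := ker q
  obtain ⟨ιK, c, hcs, hck, hcfin⟩ := Aux.mcover hsq hu hne (↥(ker q))
  haveI : Finite ιK := hcfin inferInstance
  haveI : Module.Finite R (ιK →₀ R) := Aux.finsupp_finite ιK
  have hp₂proj : Module.Projective R (X₁ × (ι →₀ R)) := by
    haveI := hX₁; infer_instance
  have hkerc : (ker c).FG := by
    have := Aux.schanuel_fg (M := ↥(ker q)) (P := X₁ × (ι →₀ R)) (Q := ιK →₀ R) p₂ c hp₂s hcs
      hp₂proj (inferInstance : Module.Projective R (ιK →₀ R)) hkerp₂ inferInstance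
    exact this
  have hEq : ker c = (m • ⊤ : Submodule R (ιK →₀ R)) := by
    refine le_antisymm hck ?_
    intro y hy
    rw [LinearMap.mem_ker]
    refine Submodule.smul_induction_on hy (fun a ha z _ => ?_) (fun z z' hz hz' => ?_)
    · rw [map_smul]; exact htorsK a ha (c z)
    · rw [map_add, hz, hz', add_zero]
  have hneK : Nonempty ιK := by
    by_contra h
    rw [not_nonempty_iff] at h
    apply hbotq
    rw [eq_bot_iff]
    intro y hy
    obtain ⟨z, hz⟩ := hcs ⟨y, hy⟩
    have hz0 : z = 0 := by ext i; exact (h.false i).elim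
    rw [hz0, map_zero] at hz
    simpa [Submodule.mem_bot] using congrArg Subtype.val hz.symm
  obtain ⟨j⟩ := hneK
  have hmap : Submodule.map (Finsupp.lapply j : (ιK →₀ R) →ₗ[R] R)
      (m • ⊤ : Submodule R (ιK →₀ R)) = m := by
    apply le_antisymm
    · rintro _ ⟨z, hz, rfl⟩
      refine Submodule.smul_induction_on hz (fun a ha y _ => ?_) (fun y y' hy hy' => ?_)
      · show (a • y) j ∈ m
        rw [Finsupp.smul_apply, smul_eq_mul]
        exact Ideal.mul_mem_right _ _ ha
      · show (y + y') j ∈ m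
        rw [Finsupp.add_apply]
        exact Ideal.add_mem _ hy hy'
    · intro a ha
      have hs : Finsupp.single j a = a • Finsupp.single j (1 : R) := by
        rw [Finsupp.smul_single, smul_eq_mul, mul_one]
      refine ⟨Finsupp.single j a, hs ▸ Submodule.smul_mem_smul ha trivial, ?_⟩
      show (Finsupp.single j a) j = a
      rw [Finsupp.single_eq_same]
  rw [← hmap, ← hEq]
  exact hkerc.map _
end AuxMore

/-- The local ring `R = k[x₁, x₂, …]/(x₁, x₂, …)²`: the quotient of the polynomial ring
in countably many variables over `k` by the square of the ideal generated by all the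
variables. -/
abbrev ExampleRing (k : Type) [Field k] : Type :=
  MvPolynomial ℕ k ⧸
    (Ideal.span (Set.range (MvPolynomial.X : ℕ → MvPolynomial ℕ k)) ^ 2)

set_option maxHeartbeats 1000000
set_option synthInstance.maxHeartbeats 400000

noncomputable section AuxConcrete

variable (k : Type) [Field k]

def exI : Ideal (MvPolynomial ℕ k) := Ideal.span (Set.range MvPolynomial.X)

def exm : Ideal (ExampleRing k) := (exI k).map (Ideal.Quotient.mk ((exI k) ^ 2))

def exx (n : ℕ) : ExampleRing k := Ideal.Quotient.mk ((exI k) ^ 2) (MvPolynomial.X n)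

lemma exI_cc {f : MvPolynomial ℕ k} (hf : f ∈ exI k) : MvPolynomial.coeff 0 f = 0 := by
  have hle : exI k ≤ RingHom.ker (MvPolynomial.constantCoeff (σ := ℕ) (R := k)) := by
    rw [exI, Ideal.span_le]
    rintro _ ⟨i, rfl⟩
    simp [RingHom.mem_ker]
  have := hle hf
  rwa [RingHom.mem_ker, MvPolynomial.constantCoeff_eq] at this

lemma exI_sq_coeff {f : MvPolynomial ℕ k} (hf : f ∈ (exI k) ^ 2) (j : ℕ) :
    MvPolynomial.coeff (Finsupp.single j 1) f = 0 := by
  classical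
  rw [pow_two] at hf
  refine Submodule.mul_induction_on hf (fun g hg h hh => ?_) (fun x y hx hy => by
    rw [MvPolynomial.coeff_add, hx, hy, add_zero])
  rw [MvPolynomial.coeff_mul]
  apply Finset.sum_eq_zero
  rintro ⟨a, b⟩ hab
  rw [Finset.HasAntidiagonal.mem_antidiagonal] at hab
  by_cases haj : a j = 0
  · have ha0 : a = 0 := by
      ext i
      simp only [Finsupp.coe_zero, Pi.zero_apply]
      have hi : a i + b i = (Finsupp.single j 1) i := by rw [← hab]; rfl
      by_cases hij : i = j
      · subst hij; exact haj
      · rw [Finsupp.single_eq_of_ne hij] at hi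
        omega
    rw [ha0]
    show MvPolynomial.coeff 0 g * _ = 0
    rw [exI_cc k hg, zero_mul]
  · have hb0 : b = 0 := by
      ext i
      simp only [Finsupp.coe_zero, Pi.zero_apply]
      have hi : a i + b i = (Finsupp.single j 1) i := by rw [← hab]; rfl
      by_cases hij : i = j
      · subst hij; rw [Finsupp.single_eq_same] at hi; omega
      · rw [Finsupp.single_eq_of_ne hij] at hi
        omega
    rw [hb0]
    show _ * MvPolynomial.coeff 0 h = 0
    rw [exI_cc k hh, mul_zero]

lemma exx_li : LinearIndependent k (exx k) := by
  classical
  rw [linearIndependent_iff]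
  intro l hl
  have hmem : (Finsupp.linearCombination k (MvPolynomial.X : ℕ → MvPolynomial ℕ k)) l
      ∈ (exI k) ^ 2 := by
    rw [← Ideal.Quotient.eq_zero_iff_mem]
    have happ := Finsupp.apply_linearCombination k
      ((Ideal.Quotient.mkₐ k ((exI k) ^ 2)).toLinearMap)
      (MvPolynomial.X : ℕ → MvPolynomial ℕ k) l
    rw [show ((Ideal.Quotient.mkₐ k ((exI k) ^ 2)).toLinearMap ∘
        (MvPolynomial.X : ℕ → MvPolynomial ℕ k)) = exx k from rfl] at happ
    rw [show (Ideal.Quotient.mk ((exI k) ^ 2))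
        ((Finsupp.linearCombination k (MvPolynomial.X : ℕ → MvPolynomial ℕ k)) l)
      = (Ideal.Quotient.mkₐ k ((exI k) ^ 2)).toLinearMap
        ((Finsupp.linearCombination k (MvPolynomial.X : ℕ → MvPolynomial ℕ k)) l) from rfl]
    rw [happ]
    exact hl
  ext j
  have hco : MvPolynomial.coeff (Finsupp.single j 1)
      ((Finsupp.linearCombination k (MvPolynomial.X : ℕ → MvPolynomial ℕ k)) l) = l j := by
    rw [Finsupp.linearCombination_apply, Finsupp.sum, MvPolynomial.coeff_sum]
    have hterm : ∀ n ∈ l.support,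
        MvPolynomial.coeff (Finsupp.single j 1) (l n • MvPolynomial.X n)
          = l n • (if Finsupp.single n 1 = Finsupp.single j 1 then (1:k) else 0) := by
      intro n _
      rw [MvPolynomial.coeff_smul, MvPolynomial.coeff_X' n (Finsupp.single j 1)]
    rw [Finset.sum_congr rfl hterm]
    by_cases hj : j ∈ l.support
    · rw [Finset.sum_eq_single j (fun n _ hnj => by
        rw [if_neg (fun h => hnj (by
          have := Finsupp.single_left_injective (one_ne_zero (α := ℕ)) h
          exact this)), smul_zero]) (fun h => absurd hj h)]
      rw [if_pos rfl, smul_eq_mul, mul_one]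
    · rw [Finset.sum_eq_zero (fun n hn => by
        rw [if_neg (fun h => by
          have := Finsupp.single_left_injective (one_ne_zero (α := ℕ)) h
          subst this; exact hj hn), smul_zero])]
      rw [Finsupp.notMem_support_iff.1 hj]
  rw [Finsupp.coe_zero, Pi.zero_apply, ← hco]
  exact exI_sq_coeff k hmem j

lemma ex_sub_C_mem (p : MvPolynomial ℕ k) :
    p - MvPolynomial.C (MvPolynomial.constantCoeff p) ∈ exI k := by
  induction p using MvPolynomial.induction_on with
  | C a => simp
  | add p q hp hq =>
    have h := Submodule.add_mem _ hp hq
    have he : p - MvPolynomial.C (MvPolynomial.constantCoeff p) +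
        (q - MvPolynomial.C (MvPolynomial.constantCoeff q)) =
        p + q - MvPolynomial.C (MvPolynomial.constantCoeff (p + q)) := by
      rw [map_add, map_add]
      ring
    rwa [he] at h
  | mul_X p n hp =>
    rw [map_mul, MvPolynomial.constantCoeff_X, mul_zero, map_zero, sub_zero]
    exact Ideal.mul_mem_left _ _ (Ideal.subset_span ⟨n, rfl⟩)

lemma ex_dec (r : ExampleRing k) :
    ∃ (c : k) (v : ExampleRing k), v ∈ exm k ∧ r = algebraMap k (ExampleRing k) c + v := by
  obtain ⟨f, rfl⟩ := Ideal.Quotient.mk_surjective (I := (exI k) ^ 2) r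
  refine ⟨MvPolynomial.constantCoeff f,
    Ideal.Quotient.mk ((exI k) ^ 2) (f - MvPolynomial.C (MvPolynomial.constantCoeff f)),
    Ideal.mem_map_of_mem _ (ex_sub_C_mem k f), ?_⟩
  have halg : algebraMap k (ExampleRing k) (MvPolynomial.constantCoeff f)
      = Ideal.Quotient.mk ((exI k) ^ 2) (MvPolynomial.C (MvPolynomial.constantCoeff f)) := rfl
  conv_lhs => rw [show f = MvPolynomial.C (MvPolynomial.constantCoeff f) +
    (f - MvPolynomial.C (MvPolynomial.constantCoeff f)) by ring]
  rw [map_add, halg]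
  rfl

lemma ex_sq : ∀ a ∈ exm k, ∀ b ∈ exm k, a * b = 0 := by
  have hmm : exm k * exm k = ⊥ := by
    rw [exm]
    erw [← Ideal.map_mul, ← pow_two]
    exact Ideal.map_quotient_self _
  intro a ha b hb
  have := Ideal.mul_mem_mul ha hb
  rw [hmm, Ideal.mem_bot] at this
  exact this

lemma exx_ne_zero (n : ℕ) : exx k n ≠ 0 := (exx_li k).ne_zero n

instance : Nontrivial (ExampleRing k) := nontrivial_of_ne _ _ (exx_ne_zero k 0)

lemma ex_unit : ∀ r : ExampleRing k, r ∉ exm k → IsUnit r := by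
  intro r hr
  obtain ⟨c, v, hv, rfl⟩ := ex_dec k r
  have hc : c ≠ 0 := by
    intro h
    exact hr (by rw [h, map_zero, zero_add]; exact hv)
  refine isUnit_iff_exists_inv.2
    ⟨algebraMap k _ c⁻¹ - algebraMap k _ (c⁻¹ * c⁻¹) * v, ?_⟩
  set u := algebraMap k (ExampleRing k) c with hudef
  set w := algebraMap k (ExampleRing k) c⁻¹ with hwdef
  have h1 : u * w = 1 := by
    rw [hudef, hwdef, ← map_mul, mul_inv_cancel₀ hc, map_one]
  have h0 : v * (w * w * v) = 0 :=
    ex_sq k v hv _ (Ideal.mul_mem_left _ _ hv)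
  have hww : algebraMap k (ExampleRing k) (c⁻¹ * c⁻¹) = w * w := by
    rw [hwdef, map_mul]
  rw [hww]
  have hexp : (u + v) * (w - w * w * v)
      = u * w + v * w - (u * w) * (w * v) - v * (w * w * v) := by ring
  rw [hexp, h1, h0, one_mul]
  ring

lemma ex_ne_top : exm k ≠ ⊤ := by
  intro h
  have h1 : (1 : ExampleRing k) ∈ exm k := by rw [h]; trivial
  have := ex_sq k 1 h1 1 h1
  rw [mul_one] at this
  exact one_ne_zero this

lemma exx_mem (n : ℕ) : exx k n ∈ exm k :=
  Ideal.mem_map_of_mem _ (Ideal.subset_span ⟨n, rfl⟩)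

lemma ex_ne_bot : exm k ≠ ⊥ := by
  intro h
  have := exx_mem k 0
  rw [h, Ideal.mem_bot] at this
  exact exx_ne_zero k 0 this

lemma ex_not_fg : ¬ (exm k).FG := by
  rintro ⟨S, hS⟩
  set W : Submodule k (ExampleRing k) := Submodule.span k (↑S) with hW
  have hsub : ∀ y ∈ exm k, y ∈ W := by
    intro y hy
    rw [← hS] at hy
    have : y ∈ W ∧ y ∈ exm k := by
      refine Submodule.span_induction (fun s hs => ?_) ⟨W.zero_mem, (exm k).zero_mem⟩
        (fun x y _ _ hx hy => ⟨W.add_mem hx.1 hy.1, (exm k).add_mem hx.2 hy.2⟩)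
        (fun r x _ hx => ?_) hy
      · refine ⟨Submodule.subset_span hs, ?_⟩
        rw [← hS]
        exact Ideal.subset_span hs
      · obtain ⟨c, v, hv, rfl⟩ := ex_dec k r
        have hsm : (algebraMap k _ c + v) • x = c • x + v * x := by
          rw [add_smul, smul_eq_mul, smul_eq_mul, ← Algebra.smul_def]
        have hvx : v * x = 0 := ex_sq k v hv x hx.2
        refine ⟨?_, Submodule.smul_mem _ _ hx.2⟩
        rw [hsm, hvx, add_zero]
        exact W.smul_mem c hx.1
    exact this.1
  haveI hWfin : FiniteDimensional k W := FiniteDimensional.span_of_finite k S.finite_toSet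
  have li : LinearIndependent k (fun n => (⟨exx k n, hsub _ (exx_mem k n)⟩ : W)) := by
    apply LinearIndependent.of_comp W.subtype
    exact exx_li k
  have h1 : (Cardinal.aleph0 : Cardinal) ≤ Module.rank k W := li.aleph0_le_rank
  exact absurd h1 (not_le.2 (Module.rank_lt_aleph0 k W))

end AuxConcrete

/-- **Example 2.2.** Let `k` be a field and `R = k[x₁, x₂, …]/(x₁, x₂, …)²`.  Then `R` is
not coherent, every `R`-module of finite projective dimension is projective
(equivalently, every non-projective `R`-module has infinite projective dimension), `R` is
not regular, and yet every `R`-module admitting a resolution by degreewise finitely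
generated projective modules has finite projective dimension. -/
theorem example_noncoherent (k : Type) [Field k] :
    (¬ ∀ I : Ideal (ExampleRing k), I.FG → Module.FinitePresentation (ExampleRing k) I) ∧
    (∀ (M : Type) [AddCommGroup M] [Module (ExampleRing k) M],
      FiniteProjDim (ExampleRing k) M → Module.Projective (ExampleRing k) M) ∧
    (∀ (M : Type) [AddCommGroup M] [Module (ExampleRing k) M],
      ¬ Module.Projective (ExampleRing k) M → ¬ FiniteProjDim (ExampleRing k) M) ∧
    (¬ ∀ I : Ideal (ExampleRing k), I.FG → FiniteProjDim (ExampleRing k) I) ∧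
    (∀ M : ModuleCat.{0} (ExampleRing k), HasDegreewiseFGProjectiveResolution M →
      FiniteProjDim (ExampleRing k) M) := by
  classical
  have hpart2 : ∀ (M : Type) [AddCommGroup M] [Module (ExampleRing k) M],
      FiniteProjDim (ExampleRing k) M → Module.Projective (ExampleRing k) M := by
    intro M _ _ h
    obtain ⟨n, hn⟩ := h
    exact Aux.projDimLE_projective (ex_sq k) (ex_unit k) (ex_ne_bot k) (ex_ne_top k) n M hn
  set I₀ : Ideal (ExampleRing k) := Ideal.span {exx k 0} with hI₀
  have hfgI : I₀.FG := ⟨{exx k 0}, by rw [hI₀, Finset.coe_singleton]⟩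
  have hI₀le : I₀ ≤ exm k := by
    rw [hI₀, Ideal.span_le, Set.singleton_subset_iff]
    exact exx_mem k 0
  have hItors : ∀ a ∈ exm k, ∀ x : ↥I₀, a • x = (0 : ↥I₀) := by
    intro a ha x
    apply Subtype.ext
    show a • (x : ExampleRing k) = 0
    rw [smul_eq_mul]
    exact ex_sq k a ha _ (hI₀le x.2)
  have hInotproj : ¬ Module.Projective (ExampleRing k) ↥I₀ := by
    intro hproj
    have hz := Aux.key_zero (K := ↥I₀) (ex_unit k) (ex_ne_bot k) hproj hItors
    have h0 := hz ⟨exx k 0, Submodule.subset_span rfl⟩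
    exact exx_ne_zero k 0 (by simpa using congrArg Subtype.val h0)
  refine ⟨?_, hpart2, ?_, ?_, ?_⟩
  · -- not coherent
    intro hco
    haveI hFP : Module.FinitePresentation (ExampleRing k) ↥I₀ := hco I₀ hfgI
    set x0 : ↥I₀ := (⟨exx k 0, Submodule.subset_span rfl⟩ : ↥I₀) with hx0
    set f : ExampleRing k →ₗ[ExampleRing k] ↥I₀ :=
      LinearMap.toSpanSingleton (ExampleRing k) ↥I₀ x0 with hf
    have hfs : Surjective f := by
      intro y
      have hy : (y : ExampleRing k) ∈ Ideal.span {exx k 0} := y.2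
      obtain ⟨a, ha⟩ := Ideal.mem_span_singleton'.1 hy
      refine ⟨a, Subtype.ext ?_⟩
      show a • exx k 0 = (y : ExampleRing k)
      rw [smul_eq_mul, ha]
    have hker : LinearMap.ker f = exm k := by
      ext r
      rw [LinearMap.mem_ker]
      constructor
      · intro h
        have hval : r * exx k 0 = 0 := by
          have h2 := congrArg Subtype.val h
          simpa [hf, LinearMap.toSpanSingleton_apply, hx0, smul_eq_mul] using h2
        obtain ⟨c, v, hv, rfl⟩ := ex_dec k r
        have hv0 : v * exx k 0 = 0 := ex_sq k v hv _ (exx_mem k 0)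
        have hc0 : algebraMap k (ExampleRing k) c * exx k 0 = 0 := by
          calc algebraMap k (ExampleRing k) c * exx k 0
              = (algebraMap k (ExampleRing k) c + v) * exx k 0 - v * exx k 0 := by ring
            _ = 0 := by rw [hval, hv0, sub_zero]
        by_cases hc : c = 0
        · rw [hc, map_zero, zero_add]; exact hv
        · exfalso
          apply exx_ne_zero k 0
          calc exx k 0 = algebraMap k (ExampleRing k) (c⁻¹ * c) * exx k 0 := by
                rw [inv_mul_cancel₀ hc, map_one, one_mul]
            _ = algebraMap k (ExampleRing k) c⁻¹ * (algebraMap k (ExampleRing k) c * exx k 0) := by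
                rw [map_mul, mul_assoc]
            _ = 0 := by rw [hc0, mul_zero]
      · intro hr
        apply Subtype.ext
        show r • exx k 0 = (0 : ExampleRing k)
        rw [smul_eq_mul]
        exact ex_sq k r hr _ (exx_mem k 0)
    have hfg := Module.FinitePresentation.fg_ker f hfs
    rw [hker] at hfg
    exact ex_not_fg k hfg
  · -- non-projective modules have infinite projective dimension
    intro M _ _ hnp hfpd
    exact hnp (hpart2 M hfpd)
  · -- not regular
    intro hreg
    exact hInotproj (hpart2 ↥I₀ (hreg I₀ hfgI))
  · -- degreewise f.g. resolutions imply finite projective dimension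
    intro M hM
    obtain ⟨res, hres⟩ := hM
    set C := res.complex with hC
    set e : ((ChainComplex.single₀ (ModuleCat.{0} (ExampleRing k))).obj M).X 0 ≅ M :=
      HomologicalComplex.singleObjXSelf (ComplexShape.down ℕ) 0 M with he
    set ε : C.X 0 ⟶ M := res.π.f 0 ≫ e.hom with hε
    have hεs : Surjective ε := by
      have h1 : Epi ε := by rw [hε]; exact epi_comp _ _
      exact (ModuleCat.epi_iff_surjective ε).1 h1
    have hexact0 : (ShortComplex.mk (C.d 1 0) (res.π.f 0)
        res.complex_d_comp_π_f_zero).Exact :=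
      ShortComplex.exact_of_g_is_cokernel _ res.isColimitCokernelCofork
    have hrange0 : LinearMap.range (C.d 1 0).hom = LinearMap.ker (res.π.f 0).hom :=
      hexact0.moduleCat_range_eq_ker
    have hmono : Injective e.hom := (ModuleCat.mono_iff_injective e.hom).1 inferInstance
    have hkerε : LinearMap.ker ε.hom
        = LinearMap.ker (res.π.f 0).hom := by
      ext x
      rw [LinearMap.mem_ker, LinearMap.mem_ker]
      constructor
      · intro h
        apply hmono
        rw [map_zero]
        exact h
      · intro h
        show e.hom ((res.π.f 0) x) = 0
        rw [h, map_zero]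
    have hexact1 := res.exact_succ 0
    have hrange1 : LinearMap.range (C.d 2 1).hom = LinearMap.ker (C.d 1 0).hom :=
      hexact1.moduleCat_range_eq_ker
    have hP0 : Module.Projective (ExampleRing k) ↥(C.X 0) :=
      (IsProjective.iff_projective (C.X 0)).2 (res.projective 0)
    have hP1 : Module.Projective (ExampleRing k) ↥(C.X 1) :=
      (IsProjective.iff_projective (C.X 1)).2 (res.projective 1)
    have hproj : Module.Projective (ExampleRing k) ↥M :=
      Aux.part5 (ex_sq k) (ex_unit k) (ex_ne_bot k) (ex_ne_top k) (ex_not_fg k)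
        hP0 hP1 (hres 0) (hres 1) (hres 2)
        ε.hom (C.d 1 0).hom (C.d 2 1).hom
        hεs (by rw [hrange0, hkerε]) hrange1
    exact ⟨0, hproj⟩


end
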